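/- arXiv:2512.24025 — 2 statements merged into one kernel-verified Lean document; each statement's English description precedes it below -/
import Mathlib

section
/- Let (V, ℓ) be a finite-dimensional filtered vector space over a field κ, let {v₁, …, v_d} be an ℓ-orthogonal basis of V, and let {w₁, …, w_d} be another basis of V. Then {w₁, …, w_d} is ℓ-orthogonal if and only if the multisets {ℓ(v₁), …, ℓ(v_d)} and {ℓ(w₁), …, ℓ(w_d)} are equal. -/
open scoped Classical

universe u v

/-- `ℓ` is a filtration function making `(V, ℓ)` a filtered vector space over `κ`. -/
def IsFiltration' (κ : Type u) [Field κ] {V : Type v} [AddCommGroup V] [Module κ V]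
    (ℓ : V → WithBot ℝ) : Prop :=
  (∀ v : V, ℓ v = ⊥ ↔ v = 0) ∧
    (∀ (c : κ) (v : V), c ≠ 0 → ℓ (c • v) = ℓ v) ∧
      ∀ v w : V, ℓ (v + w) ≤ max (ℓ v) (ℓ w)

/-- A subset `S ⊆ V ∖ {0}` is `ℓ`-orthogonal. -/
def IsOrthogonal (κ : Type u) [Field κ] {V : Type v} [AddCommGroup V] [Module κ V]
    (ℓ : V → WithBot ℝ) (S : Set V) : Prop :=
  (0 : V) ∉ S ∧
    ∀ T : Finset V, (T : Set V) ⊆ S → ∀ c : V → κ,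
      ℓ (∑ v ∈ T, c v • v) = (T.filter fun v => c v ≠ 0).sup ℓ

theorem multiset_eq_of_countP {α : Type*} [LinearOrder α] :
    ∀ (s t : Multiset α), Multiset.card s = Multiset.card t →
      (∀ a, s.countP (· ≤ a) = t.countP (· ≤ a)) → s = t := by
  intro s
  induction s using Multiset.strongInductionOn with
  | ih s ih =>
    intro t hcard hcnt
    rcases eq_or_ne s 0 with rfl | hs
    · simp at hcard; exact (Multiset.card_eq_zero.mp hcard.symm).symm
    · have hsne : s.toFinset.Nonempty := by
        rw [Finset.nonempty_iff_ne_empty]; simpa using hs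
      set a := s.toFinset.max' hsne with ha
      have has : a ∈ s := Multiset.mem_toFinset.mp (s.toFinset.max'_mem hsne)
      have hamax : ∀ b ∈ s, b ≤ a := fun b hb =>
        s.toFinset.le_max' b (Multiset.mem_toFinset.mpr hb)
      -- all elements of t are ≤ a
      have htle : ∀ b ∈ t, b ≤ a := by
        have : t.countP (· ≤ a) = Multiset.card t := by
          rw [← hcnt, ← hcard]
          exact Multiset.countP_eq_card.mpr hamax
        exact Multiset.countP_eq_card.mp this
      -- a ∈ t
      have hat : a ∈ t := by
        by_contra hno
        have htne : t ≠ 0 := by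
          intro h0; rw [h0] at hcard; simp at hcard
          exact hs hcard
        have htfne : t.toFinset.Nonempty := by
          rw [Finset.nonempty_iff_ne_empty]; simpa using htne
        set a' := t.toFinset.max' htfne with ha'
        have ha't : a' ∈ t := Multiset.mem_toFinset.mp (t.toFinset.max'_mem htfne)
        have ha'lt : a' < a := lt_of_le_of_ne (htle a' ha't) (fun h => hno (h ▸ ha't))
        have h1 : t.countP (· ≤ a') = Multiset.card t :=
          Multiset.countP_eq_card.mpr (fun b hb => t.toFinset.le_max' b (Multiset.mem_toFinset.mpr hb))
        have h2 : s.countP (· ≤ a') < Multiset.card s := by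
          by_contra hle
          push_neg at hle
          have : s.countP (· ≤ a') = Multiset.card s :=
            le_antisymm (Multiset.countP_le_card _ _) hle
          exact absurd (Multiset.countP_eq_card.mp this a has) (not_le.mpr ha'lt)
        rw [hcnt, h1, hcard] at h2
        exact lt_irrefl _ h2
      -- peel off a
      have hse : s = a ::ₘ s.erase a := (Multiset.cons_erase has).symm
      have hte : t = a ::ₘ t.erase a := (Multiset.cons_erase hat).symm
      have herase : s.erase a = t.erase a := by
        apply ih _ (Multiset.erase_lt.mpr has)
        · have := hcard
          rw [hse, hte] at this
          simpa using this
        · intro x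
          have hcx := hcnt x
          rw [hse, hte, Multiset.countP_cons, Multiset.countP_cons] at hcx
          omega
      rw [hse, hte, herase]

section
variable {κ : Type u} [Field κ] {V : Type v} [AddCommGroup V] [Module κ V]
variable {ℓ : V → WithBot ℝ}

def filtSub (hℓ : IsFiltration' κ ℓ) (t : WithBot ℝ) : Submodule κ V where
  carrier := {v | ℓ v ≤ t}
  add_mem' := fun hx hy => le_trans (hℓ.2.2 _ _) (max_le hx hy)
  zero_mem' := by
    show ℓ 0 ≤ t
    rw [(hℓ.1 0).mpr rfl]; exact bot_le
  smul_mem' := fun c v hv => by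
    by_cases hc : c = 0
    · show ℓ (c • v) ≤ t
      rw [hc, zero_smul, (hℓ.1 0).mpr rfl]; exact bot_le
    · show ℓ (c • v) ≤ t
      rw [hℓ.2.1 c v hc]; exact hv

lemma mem_filtSub {hℓ : IsFiltration' κ ℓ} {t : WithBot ℝ} {v : V} :
    v ∈ filtSub hℓ t ↔ ℓ v ≤ t := Iff.rfl

lemma ell_sum_le (hℓ : IsFiltration' κ ℓ) {ι : Type*} (s : Finset ι) (f : ι → V) :
    ℓ (∑ i ∈ s, f i) ≤ s.sup fun i => ℓ (f i) := by
  induction s using Finset.cons_induction with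
  | empty => simp [(hℓ.1 0).mpr rfl]
  | cons a s ha ih =>
    rw [Finset.sum_cons, Finset.sup_cons]
    exact le_trans (hℓ.2.2 _ _) (max_le_max le_rfl ih)

/-- Index-level characterization of orthogonality for an injective family of nonzero
vectors. -/
lemma isOrthogonal_range_iff {d : ℕ} {u : Fin d → V} (hinj : Function.Injective u)
    (h0 : ∀ i, u i ≠ 0) :
    IsOrthogonal κ ℓ (Set.range u) ↔
      ∀ c : Fin d → κ, ℓ (∑ i, c i • u i) =
        (Finset.univ.filter fun i => c i ≠ 0).sup fun i => ℓ (u i) := by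
  constructor
  · intro h c
    have h2 := h.2 (Finset.univ.image u) (by simp [Set.subset_def]) (Function.extend u c 0)
    rw [Finset.sum_image (fun a _ b _ h => hinj h)] at h2
    simp only [hinj.extend_apply c 0] at h2
    rw [h2, Finset.filter_image, Finset.sup_image]
    congr 1
    apply Finset.filter_congr
    intro i _
    simp [hinj.extend_apply c 0]
  · intro h
    refine ⟨fun h0' => ?_, fun T hT c => ?_⟩
    · obtain ⟨i, hi⟩ := h0'
      exact h0 i hi
    · have hTim : T = (Finset.univ.filter fun i => u i ∈ T).image u := by
        ext x
        simp only [Finset.mem_image, Finset.mem_filter, Finset.mem_univ, true_and]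
        constructor
        · intro hx
          obtain ⟨i, hi⟩ := hT hx
          exact ⟨i, hi ▸ hx, hi⟩
        · rintro ⟨i, hi, rfl⟩; exact hi
      set I := Finset.univ.filter fun i => u i ∈ T with hI
      set c'' : Fin d → κ := fun i => if i ∈ I then c (u i) else 0 with hc''
      have hsum : ∑ v ∈ T, c v • v = ∑ i, c'' i • u i := by
        rw [hTim, Finset.sum_image (fun a _ b _ h => hinj h)]
        rw [← Finset.sum_subset (Finset.subset_univ I) (fun i _ hni => by simp [hc'', if_neg hni])]
        exact Finset.sum_congr rfl fun i hi => by simp [hc'', if_pos hi]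
      rw [hsum, h c'', hTim, Finset.filter_image, Finset.sup_image]
      congr 1
      ext i
      by_cases hiI : i ∈ I
      · simp only [hI, Finset.mem_filter, Finset.mem_univ, true_and] at hiI
        simp [hiI, hc'', hI]
      · have : u i ∉ T := by simpa [hI] using hiI
        simp [this, hc'', hI]
variable [FiniteDimensional κ V]

lemma card_filter_le_finrank (hℓ : IsFiltration' κ ℓ) {d : ℕ} {u : Fin d → V}
    (hu : LinearIndependent κ u) (t : WithBot ℝ) :
    (Finset.univ.filter fun i => ℓ (u i) ≤ t).card ≤ Module.finrank κ (filtSub hℓ t) := by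
  classical
  set S := Finset.univ.filter fun i => ℓ (u i) ≤ t with hS
  have hf : LinearIndependent κ (fun i : {i // i ∈ S} =>
      (⟨u i, (Finset.mem_filter.mp i.2).2⟩ : filtSub hℓ t)) := by
    apply LinearIndependent.of_comp (filtSub hℓ t).subtype
    exact hu.comp (fun i : {i // i ∈ S} => (i : Fin d)) Subtype.val_injective
  simpa [Fintype.card_coe] using hf.fintype_card_le_finrank

lemma span_filter_finrank {d : ℕ} (u : Module.Basis (Fin d) κ V) (t : WithBot ℝ) :
    Module.finrank κ (Submodule.span κ (u '' {i | ℓ (u i) ≤ t})) =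
      (Finset.univ.filter fun i => ℓ (u i) ≤ t).card := by
  classical
  set S := Finset.univ.filter fun i => ℓ (u i) ≤ t with hS
  have hrange : Set.range (fun j : {i // i ∈ S} => u ↑j) = u '' {i | ℓ (u i) ≤ t} := by
    ext x
    simp [hS, Set.range, Set.image]
  rw [← hrange]
  exact (finrank_span_eq_card (u.linearIndependent.comp (fun j : {i // i ∈ S} => (j : Fin d))
      Subtype.val_injective)).trans (Fintype.card_coe S)

lemma span_filter_le (hℓ : IsFiltration' κ ℓ) {d : ℕ} (u : Fin d → V) (t : WithBot ℝ) :
    Submodule.span κ (u '' {i | ℓ (u i) ≤ t}) ≤ filtSub hℓ t := by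
  rw [Submodule.span_le]
  rintro _ ⟨i, hi, rfl⟩
  exact hi

/-- For an orthogonal basis, the filtration submodule is spanned by appropriate basis
vectors, and the count equals the dimension. -/
lemma orth_finrank_eq (hℓ : IsFiltration' κ ℓ) {d : ℕ} (u : Module.Basis (Fin d) κ V)
    (hu : ∀ c : Fin d → κ, ℓ (∑ i, c i • u i) =
      (Finset.univ.filter fun i => c i ≠ 0).sup fun i => ℓ (u i)) (t : WithBot ℝ) :
    Module.finrank κ (filtSub hℓ t) = (Finset.univ.filter fun i => ℓ (u i) ≤ t).card := by
  classical
  have hspan : filtSub hℓ t = Submodule.span κ (u '' {i | ℓ (u i) ≤ t}) := by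
    refine le_antisymm ?_ (span_filter_le hℓ u t)
    intro v hv
    rw [u.mem_span_image]
    intro i hi
    have hv' := hu (fun i => u.repr v i)
    rw [u.sum_repr v] at hv'
    have hle : ℓ (u i) ≤ ℓ v := by
      rw [hv']
      exact Finset.le_sup (f := fun i => ℓ (u i))
        (Finset.mem_filter.mpr ⟨Finset.mem_univ i, Finsupp.mem_support_iff.mp hi⟩)
    exact le_trans hle hv
  rw [hspan, span_filter_finrank]

/-- If the counts match the dimensions for all `t`, the basis is orthogonal. -/
lemma orth_of_counts (hℓ : IsFiltration' κ ℓ) {d : ℕ} (u : Module.Basis (Fin d) κ V)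
    (hc : ∀ t, Module.finrank κ (filtSub hℓ t) =
      (Finset.univ.filter fun i => ℓ (u i) ≤ t).card) :
    ∀ c : Fin d → κ, ℓ (∑ i, c i • u i) =
      (Finset.univ.filter fun i => c i ≠ 0).sup fun i => ℓ (u i) := by
  classical
  intro c
  set F := Finset.univ.filter fun i => c i ≠ 0 with hF
  have hle : ℓ (∑ i, c i • u i) ≤ F.sup fun i => ℓ (u i) := by
    have h1 : ∑ i ∈ F, c i • u i = ∑ i, c i • u i := by
      apply Finset.sum_filter_of_ne
      intro i _ h
      intro hc0
      exact h (by simp [hc0])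
    rw [← h1]
    refine le_trans (ell_sum_le hℓ F _) (Finset.sup_mono_fun ?_)
    intro i hi
    rw [hℓ.2.1 _ _ (Finset.mem_filter.mp hi).2]
  rcases eq_or_lt_of_le hle with heq | hlt
  · exact heq
  · exfalso
    set v := ∑ i, c i • u i with hv
    set t := ℓ v with ht
    have hFne : F.Nonempty := by
      by_contra h
      rw [Finset.not_nonempty_iff_eq_empty] at h
      rw [h, Finset.sup_empty] at hlt
      exact not_lt_bot hlt
    obtain ⟨j, hjF, hjsup⟩ := Finset.exists_mem_eq_sup F hFne (fun i => ℓ (u i))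
    have hspan : Submodule.span κ (u '' {i | ℓ (u i) ≤ t}) = filtSub hℓ t := by
      apply Submodule.eq_of_le_of_finrank_le (span_filter_le hℓ u t)
      rw [span_filter_finrank u t, hc t]
    have hvmem : v ∈ Submodule.span κ (u '' {i | ℓ (u i) ≤ t}) := by
      rw [hspan]; exact le_refl t
    rw [u.mem_span_image] at hvmem
    have hj : j ∈ (u.repr v).support := by
      rw [Finsupp.mem_support_iff]
      have := congrFun (u.repr_sum_self c) j
      rw [← hv] at this
      rw [this]
      exact (Finset.mem_filter.mp hjF).2
    have hjle : ℓ (u j) ≤ t := hvmem hj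
    rw [← hjsup] at hjle
    exact absurd hlt (not_lt.mpr hjle)

end

lemma countP_map_eq_card_filter {d : ℕ} (f : Fin d → WithBot ℝ) (a : WithBot ℝ) :
    (Finset.univ.val.map f).countP (· ≤ a) =
      (Finset.univ.filter fun i => f i ≤ a).card := by
  classical
  rw [Multiset.countP_map]
  rfl

/-- For a finite-dimensional filtered vector space `(V, ℓ)`, given an `ℓ`-orthogonal
basis `{v₁, …, v_d}` and another basis `{w₁, …, w_d}`, the latter is `ℓ`-orthogonal iff
the multisets `{ℓ v₁, …, ℓ v_d}` and `{ℓ w₁, …, ℓ w_d}` coincide. -/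
theorem orthogonal_basis_iff_multiset_eq (κ : Type u) [Field κ] {V : Type v}
    [AddCommGroup V] [Module κ V] [FiniteDimensional κ V] (ℓ : V → WithBot ℝ)
    (hℓ : IsFiltration' κ ℓ) {d : ℕ} (b w : Module.Basis (Fin d) κ V)
    (hb : IsOrthogonal κ ℓ (Set.range fun i => b i)) :
    IsOrthogonal κ ℓ (Set.range fun i => w i) ↔
      (Finset.univ.val.map fun i : Fin d => ℓ (b i)) =
        (Finset.univ.val.map fun i : Fin d => ℓ (w i)) := by
  classical
  have hb' := (isOrthogonal_range_iff b.injective (fun i => b.ne_zero i)).mp hb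
  have hbrank := orth_finrank_eq hℓ b hb'
  constructor
  · intro hw
    have hw' := (isOrthogonal_range_iff w.injective (fun i => w.ne_zero i)).mp hw
    have hwrank := orth_finrank_eq hℓ w hw'
    apply multiset_eq_of_countP
    · simp
    · intro a
      rw [countP_map_eq_card_filter, countP_map_eq_card_filter, ← hbrank a, ← hwrank a]
  · intro hm
    rw [isOrthogonal_range_iff w.injective (fun i => w.ne_zero i)]
    apply orth_of_counts hℓ w
    intro t
    rw [hbrank t, ← countP_map_eq_card_filter, ← countP_map_eq_card_filter, hm]
end

section
/- Let κ be a field, let D be an ascending chain complex over κ such that D_n = 0 for all n < 0 and each D_n admits an ℓ_n-orthogonal basis, and let A be an ascending chain complex over κ that is filtered acyclic, meaning that for every n and every x ∈ A_n with ∂_n x = 0 there exists y ∈ A_{n+1} with ∂_{n+1} y = x and ℓ_{n+1}(y) ≤ ℓ_n(x). Then every filtered chain map j : D → A is filtered homotopic to 0; that is, there exist κ-linear maps K_n : D_n → A_{n+1} with ℓ(K_n x) ≤ ℓ(x) for all x ∈ D_n and ∂_{n+1} ∘ K_n + K_{n−1} ∘ ∂_n = j_n for all n. -/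
open scoped Classical

universe u v

/-- `ℓ` is a filtration function making `(V, ℓ)` a filtered vector space over `κ`. -/
def IsFiltrationFn (κ : Type u) [Field κ] {V : Type v} [AddCommGroup V] [Module κ V]
    (ℓ : V → WithBot ℝ) : Prop :=
  (∀ v : V, ℓ v = ⊥ ↔ v = 0) ∧
    (∀ (c : κ) (v : V), c ≠ 0 → ℓ (c • v) = ℓ v) ∧
      ∀ v w : V, ℓ (v + w) ≤ max (ℓ v) (ℓ w)

/-- Transport along an equality of indices. -/
def castL (κ : Type u) [Field κ] {C : ℤ → Type v} [∀ k, AddCommGroup (C k)]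
    [∀ k, Module κ (C k)] {i j : ℤ} (h : i = j) : C i →ₗ[κ] C j := by
  subst h; exact LinearMap.id

/-- The boundary map `∂_{k+1} : C_{k+1} → C_k`, viewed as landing in `C_k`. -/
def bdryMap (κ : Type u) [Field κ] {C : ℤ → Type v} [∀ k, AddCommGroup (C k)]
    [∀ k, Module κ (C k)] (d : ∀ k : ℤ, C k →ₗ[κ] C (k - 1)) (k : ℤ) :
    C (k + 1) →ₗ[κ] C k :=
  (castL κ (show k + 1 - 1 = k by omega)).comp (d (k + 1))

/-- `(C, d, ℓ)` is an ascending chain complex over `κ`. -/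
def IsAscendingComplex (κ : Type u) [Field κ] {C : ℤ → Type v} [∀ k, AddCommGroup (C k)]
    [∀ k, Module κ (C k)] (d : ∀ k : ℤ, C k →ₗ[κ] C (k - 1))
    (ℓ : ∀ k : ℤ, C k → WithBot ℝ) : Prop :=
  (∀ (k : ℤ) (x : C k), d (k - 1) (d k x) = 0) ∧
    (∀ k : ℤ, IsFiltrationFn κ (ℓ k)) ∧
      ∀ (k : ℤ) (x : C k), ℓ (k - 1) (d k x) ≤ ℓ k x

section CastLemmas

variable (κ : Type u) [Field κ] {C : ℤ → Type v} [∀ k, AddCommGroup (C k)]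
    [∀ k, Module κ (C k)]

lemma map_castL (d : ∀ k : ℤ, C k →ₗ[κ] C (k - 1)) {m n : ℤ} (h : m = n) (y : C m) :
    d n (castL κ h y) = castL κ (by rw [h] : m - 1 = n - 1) (d m y) := by subst h; rfl

lemma ell_castL (ℓ : ∀ k : ℤ, C k → WithBot ℝ) {m n : ℤ} (h : m = n) (y : C m) :
    ℓ n (castL κ h y) = ℓ m y := by subst h; rfl

end CastLemmas

section FiltLemmas

variable {κ : Type u} [Field κ] {V : Type v} [AddCommGroup V] [Module κ V]
  {ℓ : V → WithBot ℝ}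

lemma filt_zero (hℓ : IsFiltrationFn κ ℓ) : ℓ 0 = ⊥ := (hℓ.1 0).2 rfl

lemma filt_neg (hℓ : IsFiltrationFn κ ℓ) (v : V) : ℓ (-v) = ℓ v := by
  rcases eq_or_ne v 0 with rfl | hv
  · simp
  · rw [← neg_one_smul κ v]; exact hℓ.2.1 (-1) v (by norm_num)

lemma filt_sub (hℓ : IsFiltrationFn κ ℓ) (v w : V) : ℓ (v - w) ≤ max (ℓ v) (ℓ w) := by
  rw [sub_eq_add_neg]
  exact le_trans (hℓ.2.2 v (-w)) (by rw [filt_neg hℓ])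

lemma filt_sum (hℓ : IsFiltrationFn κ ℓ) {ι : Type v} (T : Finset ι) (u : ι → V) :
    ℓ (∑ v ∈ T, u v) ≤ T.sup fun v => ℓ (u v) := by
  classical
  induction T using Finset.induction with
  | empty => simp [filt_zero hℓ]
  | insert a s h ih =>
    rw [Finset.sum_insert h, Finset.sup_insert]
    exact le_trans (hℓ.2.2 _ _) (max_le_max le_rfl ih)

end FiltLemmas

section Main

variable {κ : Type u} [Field κ] {D A : ℤ → Type v}
    [∀ k, AddCommGroup (D k)] [∀ k, Module κ (D k)]
    [∀ k, AddCommGroup (A k)] [∀ k, Module κ (A k)]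
    (dD : ∀ k : ℤ, D k →ₗ[κ] D (k - 1)) (ℓD : ∀ k : ℤ, D k → WithBot ℝ)
    (dA : ∀ k : ℤ, A k →ₗ[κ] A (k - 1)) (ℓA : ∀ k : ℤ, A k → WithBot ℝ)
    (j : ∀ n : ℤ, D n →ₗ[κ] A n)

/-- The filtration bound for a candidate homotopy map at level `n`. -/
def Bound (n : ℤ) (f : D n →ₗ[κ] A (n + 1)) : Prop :=
  ∀ x : D n, ℓA (n + 1) (f x) ≤ ℓD n x

/-- The homotopy equation at level `n`. -/
def HomEq (n : ℤ) (f : D n →ₗ[κ] A (n + 1)) (g : D (n - 1) →ₗ[κ] A (n - 1 + 1)) : Prop :=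
  ∀ x : D n,
    bdryMap κ dA n (f x) + castL κ (Int.sub_add_cancel n 1) (g (dD n x)) = j n x

lemma key (hD : IsAscendingComplex κ dD ℓD) (hA : IsAscendingComplex κ dA ℓA)
    (hDbasis : ∀ n : ℤ, ∃ S : Set (D n), IsOrthogonal κ (ℓD n) S ∧
      LinearIndependent κ (fun x : S => (x : D n)) ∧ Submodule.span κ S = ⊤)
    (hAacyclic : ∀ (n : ℤ) (x : A n), dA n x = 0 →
      ∃ y : A (n + 1), bdryMap κ dA n y = x ∧ ℓA (n + 1) y ≤ ℓA n x)
    (hjchain : ∀ (n : ℤ) (x : D n), dA n (j n x) = j (n - 1) (dD n x))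
    (hjfilt : ∀ (n : ℤ) (x : D n), ℓA n (j n x) ≤ ℓD n x)
    (n : ℤ) (g : D (n - 1) →ₗ[κ] A (n - 1 + 1))
    (hgB : Bound ℓD ℓA (n - 1) g) (hgE : ∃ g₂, HomEq dD dA j (n - 1) g g₂) :
    ∃ f : D n →ₗ[κ] A (n + 1), Bound ℓD ℓA n f ∧ HomEq dD dA j n f g := by
  obtain ⟨S, hOrth, hLI, hSpan⟩ := hDbasis n
  obtain ⟨g₂, hg₂⟩ := hgE
  have h1 : n - 1 + 1 = n := by omega
  let b : Module.Basis S κ (D n) := Module.Basis.mk hLI (by rw [Subtype.range_coe]; exact hSpan.ge)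
  have hb : ∀ v : S, b v = (v : D n) := fun v => Module.Basis.mk_apply _ _ v
  set z : S → A n := fun v => j n ↑v - castL κ h1 (g (dD n ↑v)) with hz_def
  have hzcl : ∀ v : S, dA n (z v) = 0 := by
    intro v
    have e1 : dA n (castL κ h1 (g (dD n ↑v))) = bdryMap κ dA (n - 1) (g (dD n ↑v)) := by
      rw [map_castL]; rfl
    have hchain := hg₂ (dD n ↑v)
    rw [hD.1 n ↑v, map_zero, map_zero, add_zero] at hchain
    calc dA n (z v) = dA n (j n ↑v) - dA n (castL κ h1 (g (dD n ↑v))) := map_sub _ _ _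
      _ = j (n - 1) (dD n ↑v) - bdryMap κ dA (n - 1) (g (dD n ↑v)) := by
          rw [hjchain, e1]
      _ = 0 := by rw [hchain, sub_self]
  choose y0 hy1 hy2 using fun v : S => hAacyclic n (z v) (hzcl v)
  have hybound : ∀ v : S, ℓA (n + 1) (y0 v) ≤ ℓD n ↑v := by
    intro v
    refine le_trans (hy2 v) (le_trans (filt_sub (hA.2.1 n) _ _) (max_le (hjfilt n ↑v) ?_))
    rw [ell_castL κ ℓA h1]
    exact le_trans (hgB (dD n ↑v)) (hD.2.2 n ↑v)
  refine ⟨b.constr κ y0, ?_, ?_⟩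
  · -- Bound
    intro x
    set r := b.repr x with hr
    have hx : x = ∑ v ∈ r.support, r v • (v : D n) := by
      conv_lhs => rw [← b.linearCombination_repr x]
      rw [Finsupp.linearCombination_apply, Finsupp.sum]
      exact Finset.sum_congr rfl fun v _ => by rw [hb]
    have hfx : b.constr κ y0 x = ∑ v ∈ r.support, r v • y0 v := by
      conv_lhs => rw [hx, map_sum]
      refine Finset.sum_congr rfl fun v _ => ?_
      rw [map_smul, ← hb, Module.Basis.constr_basis]
    set T : Finset (D n) := r.support.image (fun v : S => (v : D n)) with hT
    set c : D n → κ := fun w => if h : w ∈ S then r ⟨w, h⟩ else 0 with hc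
    have hinj : ∀ x ∈ r.support, ∀ y ∈ r.support,
        (x : D n) = (y : D n) → x = y := fun x _ y _ h => Subtype.coe_injective h
    have hcv : ∀ v : S, c ↑v = r v := by
      intro v
      simp [hc, v.2]
    have hsum : ∑ w ∈ T, c w • w = x := by
      rw [hT, Finset.sum_image hinj]
      rw [hx]
      exact Finset.sum_congr rfl fun v _ => by rw [hcv]
    have hTS : (T : Set (D n)) ⊆ S := by
      intro w hw
      simp only [hT, Finset.coe_image, Set.mem_image] at hw
      obtain ⟨v, _, rfl⟩ := hw
      exact v.2
    have horth := hOrth.2 T hTS c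
    rw [hsum] at horth
    have hfilter : T.filter (fun w => c w ≠ 0) = T := by
      apply Finset.filter_true_of_mem
      intro w hw
      rw [hT, Finset.mem_image] at hw
      obtain ⟨v, hv, rfl⟩ := hw
      rw [hcv]
      exact Finsupp.mem_support_iff.1 hv
    have hxval : ℓD n x = r.support.sup fun v => ℓD n ↑v := by
      rw [horth, hfilter, hT, Finset.sup_image]
      rfl
    rw [hfx, hxval]
    refine le_trans (filt_sum (hA.2.1 (n + 1)) _ _) ?_
    refine Finset.sup_mono_fun fun v hv => ?_
    have hrv : r v ≠ 0 := Finsupp.mem_support_iff.1 hv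
    rw [(hA.2.1 (n + 1)).2.1 (r v) (y0 v) hrv]
    exact hybound v
  · -- HomEq
    have hmaps : (bdryMap κ dA n).comp (b.constr κ y0)
        + (castL κ h1).comp (g.comp (dD n)) = j n := by
      apply b.ext
      intro v
      simp only [LinearMap.add_apply, LinearMap.comp_apply, hb]
      rw [show b.constr κ y0 ↑v = y0 v from by rw [← hb, Module.Basis.constr_basis]]
      rw [hy1 v, hz_def]
      exact sub_add_cancel _ _
    intro x
    exact LinearMap.congr_fun hmaps x

/-- One step of the construction, made total. -/
noncomputable def stepFun (hD : IsAscendingComplex κ dD ℓD) (hA : IsAscendingComplex κ dA ℓA)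
    (hDbasis : ∀ n : ℤ, ∃ S : Set (D n), IsOrthogonal κ (ℓD n) S ∧
      LinearIndependent κ (fun x : S => (x : D n)) ∧ Submodule.span κ S = ⊤)
    (hAacyclic : ∀ (n : ℤ) (x : A n), dA n x = 0 →
      ∃ y : A (n + 1), bdryMap κ dA n y = x ∧ ℓA (n + 1) y ≤ ℓA n x)
    (hjchain : ∀ (n : ℤ) (x : D n), dA n (j n x) = j (n - 1) (dD n x))
    (hjfilt : ∀ (n : ℤ) (x : D n), ℓA n (j n x) ≤ ℓD n x)
    (n : ℤ) (g : D (n - 1) →ₗ[κ] A (n - 1 + 1)) : D n →ₗ[κ] A (n + 1) :=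
  if h : Bound ℓD ℓA (n - 1) g ∧ ∃ g₂, HomEq dD dA j (n - 1) g g₂ then
    Classical.choose (key dD ℓD dA ℓA j hD hA hDbasis hAacyclic hjchain hjfilt n g h.1 h.2)
  else 0

/-- The full homotopy, by recursion on `n`. -/
noncomputable def Kfun (hD : IsAscendingComplex κ dD ℓD) (hA : IsAscendingComplex κ dA ℓA)
    (hDbasis : ∀ n : ℤ, ∃ S : Set (D n), IsOrthogonal κ (ℓD n) S ∧
      LinearIndependent κ (fun x : S => (x : D n)) ∧ Submodule.span κ S = ⊤)
    (hAacyclic : ∀ (n : ℤ) (x : A n), dA n x = 0 →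
      ∃ y : A (n + 1), bdryMap κ dA n y = x ∧ ℓA (n + 1) y ≤ ℓA n x)
    (hjchain : ∀ (n : ℤ) (x : D n), dA n (j n x) = j (n - 1) (dD n x))
    (hjfilt : ∀ (n : ℤ) (x : D n), ℓA n (j n x) ≤ ℓD n x)
    (n : ℤ) : D n →ₗ[κ] A (n + 1) :=
  if h : n < 0 then 0
  else stepFun dD ℓD dA ℓA j hD hA hDbasis hAacyclic hjchain hjfilt n
    (Kfun hD hA hDbasis hAacyclic hjchain hjfilt (n - 1))
termination_by (n + 1).toNat
decreasing_by omega

end Main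

section Main2

variable {κ : Type u} [Field κ] {D A : ℤ → Type v}
    [∀ k, AddCommGroup (D k)] [∀ k, Module κ (D k)]
    [∀ k, AddCommGroup (A k)] [∀ k, Module κ (A k)]
    (dD : ∀ k : ℤ, D k →ₗ[κ] D (k - 1)) (ℓD : ∀ k : ℤ, D k → WithBot ℝ)
    (dA : ∀ k : ℤ, A k →ₗ[κ] A (k - 1)) (ℓA : ∀ k : ℤ, A k → WithBot ℝ)
    (j : ∀ n : ℤ, D n →ₗ[κ] A n)

lemma Kfun_good (hD : IsAscendingComplex κ dD ℓD) (hA : IsAscendingComplex κ dA ℓA)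
    (hDneg : ∀ n : ℤ, n < 0 → ∀ x : D n, x = 0)
    (hDbasis : ∀ n : ℤ, ∃ S : Set (D n), IsOrthogonal κ (ℓD n) S ∧
      LinearIndependent κ (fun x : S => (x : D n)) ∧ Submodule.span κ S = ⊤)
    (hAacyclic : ∀ (n : ℤ) (x : A n), dA n x = 0 →
      ∃ y : A (n + 1), bdryMap κ dA n y = x ∧ ℓA (n + 1) y ≤ ℓA n x)
    (hjchain : ∀ (n : ℤ) (x : D n), dA n (j n x) = j (n - 1) (dD n x))
    (hjfilt : ∀ (n : ℤ) (x : D n), ℓA n (j n x) ≤ ℓD n x) (n : ℤ) :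
    Bound ℓD ℓA n (Kfun dD ℓD dA ℓA j hD hA hDbasis hAacyclic hjchain hjfilt n) ∧
    HomEq dD dA j n (Kfun dD ℓD dA ℓA j hD hA hDbasis hAacyclic hjchain hjfilt n)
      (Kfun dD ℓD dA ℓA j hD hA hDbasis hAacyclic hjchain hjfilt (n - 1)) := by
  have negcase : ∀ n : ℤ, n < 0 →
      Bound ℓD ℓA n (Kfun dD ℓD dA ℓA j hD hA hDbasis hAacyclic hjchain hjfilt n) ∧
      HomEq dD dA j n (Kfun dD ℓD dA ℓA j hD hA hDbasis hAacyclic hjchain hjfilt n)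
        (Kfun dD ℓD dA ℓA j hD hA hDbasis hAacyclic hjchain hjfilt (n - 1)) := by
    intro n hneg
    constructor
    · intro x
      rw [hDneg n hneg x, map_zero, filt_zero (hA.2.1 (n + 1))]
      exact bot_le
    · intro x
      rw [hDneg n hneg x]
      simp
  suffices H : ∀ m : ℕ, ∀ n : ℤ, (n + 1).toNat ≤ m →
      Bound ℓD ℓA n (Kfun dD ℓD dA ℓA j hD hA hDbasis hAacyclic hjchain hjfilt n) ∧
      HomEq dD dA j n (Kfun dD ℓD dA ℓA j hD hA hDbasis hAacyclic hjchain hjfilt n)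
        (Kfun dD ℓD dA ℓA j hD hA hDbasis hAacyclic hjchain hjfilt (n - 1)) by
    exact H ((n + 1).toNat + 1) n (by omega)
  intro m
  induction m with
  | zero => intro n hn; exact negcase n (by omega)
  | succ m ih =>
    intro n hn
    by_cases hneg : n < 0
    · exact negcase n hneg
    · have ihp := ih (n - 1) (by omega)
      have hcond : Bound ℓD ℓA (n - 1)
            (Kfun dD ℓD dA ℓA j hD hA hDbasis hAacyclic hjchain hjfilt (n - 1)) ∧
          ∃ g₂, HomEq dD dA j (n - 1)
            (Kfun dD ℓD dA ℓA j hD hA hDbasis hAacyclic hjchain hjfilt (n - 1)) g₂ :=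
        ⟨ihp.1, ⟨_, ihp.2⟩⟩
      have hKn : Kfun dD ℓD dA ℓA j hD hA hDbasis hAacyclic hjchain hjfilt n =
          Classical.choose (key dD ℓD dA ℓA j hD hA hDbasis hAacyclic hjchain hjfilt n
            (Kfun dD ℓD dA ℓA j hD hA hDbasis hAacyclic hjchain hjfilt (n - 1))
            hcond.1 hcond.2) := by
        conv_lhs => rw [Kfun]
        rw [dif_neg hneg, stepFun, dif_pos hcond]
      rw [hKn]
      exact Classical.choose_spec (key dD ℓD dA ℓA j hD hA hDbasis hAacyclic hjchain hjfilt n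
        (Kfun dD ℓD dA ℓA j hD hA hDbasis hAacyclic hjchain hjfilt (n - 1)) hcond.1 hcond.2)

end Main2

/-- Every filtered chain map from a nonnegatively supported ascending chain complex
with orthogonal bases into a filtered acyclic ascending chain complex is filtered
homotopic to `0`. -/
theorem filtered_chainMap_nullHomotopic (κ : Type u) [Field κ] {D A : ℤ → Type v}
    [∀ k, AddCommGroup (D k)] [∀ k, Module κ (D k)]
    [∀ k, AddCommGroup (A k)] [∀ k, Module κ (A k)]
    (dD : ∀ k : ℤ, D k →ₗ[κ] D (k - 1)) (ℓD : ∀ k : ℤ, D k → WithBot ℝ)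
    (dA : ∀ k : ℤ, A k →ₗ[κ] A (k - 1)) (ℓA : ∀ k : ℤ, A k → WithBot ℝ)
    (hD : IsAscendingComplex κ dD ℓD) (hA : IsAscendingComplex κ dA ℓA)
    (hDneg : ∀ n : ℤ, n < 0 → ∀ x : D n, x = 0)
    (hDbasis : ∀ n : ℤ, ∃ S : Set (D n), IsOrthogonal κ (ℓD n) S ∧
      LinearIndependent κ (fun x : S => (x : D n)) ∧ Submodule.span κ S = ⊤)
    (hAacyclic : ∀ (n : ℤ) (x : A n), dA n x = 0 →
      ∃ y : A (n + 1), bdryMap κ dA n y = x ∧ ℓA (n + 1) y ≤ ℓA n x)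
    (j : ∀ n : ℤ, D n →ₗ[κ] A n)
    (hjchain : ∀ (n : ℤ) (x : D n), dA n (j n x) = j (n - 1) (dD n x))
    (hjfilt : ∀ (n : ℤ) (x : D n), ℓA n (j n x) ≤ ℓD n x) :
    ∃ K : ∀ n : ℤ, D n →ₗ[κ] A (n + 1),
      (∀ (n : ℤ) (x : D n), ℓA (n + 1) (K n x) ≤ ℓD n x) ∧
      ∀ (n : ℤ) (x : D n),
        bdryMap κ dA n (K n x) +
            castL κ (show n - 1 + 1 = n by omega) (K (n - 1) (dD n x)) = j n x := by
  refine ⟨Kfun dD ℓD dA ℓA j hD hA hDbasis hAacyclic hjchain hjfilt,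
    fun n x => (Kfun_good dD ℓD dA ℓA j hD hA hDneg hDbasis hAacyclic hjchain hjfilt n).1 x,
    fun n x => (Kfun_good dD ℓD dA ℓA j hD hA hDneg hDbasis hAacyclic hjchain hjfilt n).2 x⟩
end
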